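/- For the natural-log Stirling bounds: for every natural number n ≥ 1, (n/e)^n · √(2πn) · e^{1/(12n+1)} ≤ n! ≤ (n/e)^n · √(2πn) · e^{1/(12n)}. -/

import Mathlib

open Real Filter Topology

noncomputable def fseq (n : ℕ) : ℝ :=
  Real.log (Nat.factorial n) - ((n : ℝ) + 1/2) * Real.log n + n

lemma mono_aux {f f' : ℝ → ℝ} {a b : ℝ}
    (hd : ∀ x ∈ Set.Icc a b, HasDerivAt f (f' x) x)
    (h0 : ∀ x ∈ Set.Icc a b, 0 ≤ f' x) : MonotoneOn f (Set.Icc a b) := by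
  apply monotoneOn_of_deriv_nonneg (convex_Icc a b)
  · exact fun x hx => (hd x hx).continuousAt.continuousWithinAt
  · intro x hx
    rw [interior_Icc] at hx
    exact (hd x (Set.Ioo_subset_Icc_self hx)).differentiableAt.differentiableWithinAt
  · intro x hx
    rw [interior_Icc] at hx
    rw [(hd x (Set.Ioo_subset_Icc_self hx)).deriv]
    exact h0 x (Set.Ioo_subset_Icc_self hx)

lemma log_lb : ∀ x ∈ Set.Icc (0:ℝ) (1/2),
    6*x/(3-x^2) ≤ Real.log (1+x) - Real.log (1-x) := by
  have hmono : MonotoneOn (fun y : ℝ => Real.log (1+y) - Real.log (1-y) - 6*y/(3-y^2))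
      (Set.Icc (0:ℝ) (1/2)) := by
    apply mono_aux (f' := fun x => 8*x^4/((1+x)*(1-x)*(3-x^2)^2))
    · intro x hx
      obtain ⟨hx0, hx1⟩ := hx
      have h1 : (0:ℝ) < 1+x := by linarith
      have h2 : (0:ℝ) < 1-x := by linarith
      have h3 : (0:ℝ) < 3-x^2 := by nlinarith
      have d1 : HasDerivAt (fun y : ℝ => Real.log (1+y)) (1/(1+x)) x := by
        simpa using ((hasDerivAt_id x).const_add 1).log h1.ne'
      have d2 : HasDerivAt (fun y : ℝ => Real.log (1-y)) (-1/(1-x)) x := by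
        simpa using ((hasDerivAt_id x).const_sub 1).log h2.ne'
      have d3 : HasDerivAt (fun y : ℝ => 6*y/(3-y^2))
          ((6*1*(3-x^2) - 6*x*(-(2*x^1)))/(3-x^2)^2) x := by
        exact ((hasDerivAt_id x).const_mul 6).div ((hasDerivAt_pow 2 x).const_sub 3 |>.congr_deriv (by norm_num)) h3.ne'
      have : HasDerivAt (fun y : ℝ => Real.log (1+y) - Real.log (1-y) - 6*y/(3-y^2)) _ x := (d1.sub d2).sub d3
      convert this using 1
      field_simp
      ring
    · intro x hx
      obtain ⟨hx0, hx1⟩ := hx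
      have h1 : (0:ℝ) < 1+x := by linarith
      have h2 : (0:ℝ) < 1-x := by linarith
      have h3 : (0:ℝ) < 3-x^2 := by nlinarith
      positivity
  intro x hx
  have h0 : (0:ℝ) ∈ Set.Icc (0:ℝ) (1/2) := by norm_num
  have := hmono h0 hx hx.1
  simp only [Real.log_one] at this
  norm_num at this
  linarith [this]

lemma log_ub : ∀ x ∈ Set.Icc (0:ℝ) (1/2),
    Real.log (1+x) - Real.log (1-x) ≤ 2*x + 2*x^3/(3*(1-x^2)) := by
  have hmono : MonotoneOn (fun y : ℝ => 2*y + 2*y^3/(3*(1-y^2)) - (Real.log (1+y) - Real.log (1-y)))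
      (Set.Icc (0:ℝ) (1/2)) := by
    apply mono_aux (f' := fun x => 4*x^4/(3*(1-x^2)^2))
    · intro x hx
      obtain ⟨hx0, hx1⟩ := hx
      have h1 : (0:ℝ) < 1+x := by linarith
      have h2 : (0:ℝ) < 1-x := by linarith
      have h4 : (0:ℝ) < 1-x^2 := by nlinarith
      have h5 : (3*(1-x^2)) ≠ 0 := by positivity
      have d1 : HasDerivAt (fun y : ℝ => Real.log (1+y)) (1/(1+x)) x := by
        simpa using ((hasDerivAt_id x).const_add 1).log h1.ne'
      have d2 : HasDerivAt (fun y : ℝ => Real.log (1-y)) (-1/(1-x)) x := by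
        simpa using ((hasDerivAt_id x).const_sub 1).log h2.ne'
      have d3 : HasDerivAt (fun y : ℝ => 2*y^3/(3*(1-y^2)))
          ((2*(3*x^2)*(3*(1-x^2)) - 2*x^3*(3*(-(2*x))))/(3*(1-x^2))^2) x := by
        refine HasDerivAt.div ?_ ?_ h5
        · exact ((hasDerivAt_pow 3 x).const_mul 2).congr_deriv (by norm_num)
        · exact (((hasDerivAt_pow 2 x).const_sub 1).const_mul 3).congr_deriv (by norm_num)
      have : HasDerivAt (fun y : ℝ => 2*y + 2*y^3/(3*(1-y^2)) - (Real.log (1+y) - Real.log (1-y))) _ x := (((hasDerivAt_id x).const_mul 2).add d3).sub (d1.sub d2)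
      convert this using 1
      field_simp
      ring
    · intro x hx
      obtain ⟨hx0, hx1⟩ := hx
      have h4 : (0:ℝ) < 1-x^2 := by nlinarith
      positivity
  intro x hx
  have h0 : (0:ℝ) ∈ Set.Icc (0:ℝ) (1/2) := by norm_num
  have := hmono h0 hx hx.1
  simp only [Real.log_one] at this
  norm_num at this
  linarith [this]

lemma fseq_step (n : ℕ) (hn : 1 ≤ n) :
    fseq n - fseq (n+1) = ((n:ℝ)+1/2) * (Real.log ((n:ℝ)+1) - Real.log n) - 1 := by
  have hn0 : (0:ℝ) < n := by exact_mod_cast hn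
  unfold fseq
  rw [Nat.factorial_succ, Nat.cast_mul,
    Real.log_mul (by positivity) (by positivity : (0:ℝ) < (Nat.factorial n : ℝ)).ne']
  push_cast
  ring

lemma step_lb (n : ℕ) (hn : 1 ≤ n) :
    1/(12*(n:ℝ)+1) - 1/(12*((n:ℝ)+1)+1) ≤ fseq n - fseq (n+1) := by
  have hn0 : (0:ℝ) < n := by exact_mod_cast hn
  have hn1 : (1:ℝ) ≤ n := by exact_mod_cast hn
  set x : ℝ := 1/(2*n+1) with hxdef
  have hxpos : 0 < x := by positivity
  have hx : x ∈ Set.Icc (0:ℝ) (1/2) := by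
    constructor
    · positivity
    · rw [hxdef, div_le_div_iff₀ (by linarith) (by norm_num)]
      linarith
  have h1 : (0:ℝ) < 1+x := by linarith
  have h2 : (0:ℝ) < 1-x := by
    rw [hxdef]; rw [sub_pos, div_lt_one (by linarith)]; linarith
  have h3 : (0:ℝ) < 3-x^2 := by nlinarith [hx.2]
  have hq : Real.log ((n:ℝ)+1) - Real.log n = Real.log (1+x) - Real.log (1-x) := by
    rw [← Real.log_div (by positivity) hn0.ne', ← Real.log_div h1.ne' h2.ne']
    congr 1
    rw [hxdef]
    field_simp
    ring
  rw [fseq_step n hn, hq]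
  have hlb := log_lb x hx
  have hx2 : (n:ℝ)+1/2 = 1/(2*x) := by
    rw [hxdef]; field_simp
  have hmul : ((n:ℝ)+1/2) * (6*x/(3-x^2)) - 1 = 1/(12*(n:ℝ)^2+12*n+2) := by
    have e1 : ((n:ℝ)+1/2) * (6*x/(3-x^2)) - 1 = x^2/(3-x^2) := by
      rw [hx2]; field_simp; ring
    rw [e1, div_eq_div_iff h3.ne' (by positivity), hxdef]
    have h21 : (2*(n:ℝ)+1) ≠ 0 := by positivity
    field_simp
    ring
  have hineq : 1/(12*(n:ℝ)+1) - 1/(12*((n:ℝ)+1)+1) ≤ 1/(12*(n:ℝ)^2+12*n+2) := by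
    rw [div_sub_div _ _ (by positivity : (12*(n:ℝ)+1) ≠ 0) (by positivity : (12*((n:ℝ)+1)+1) ≠ 0),
      div_le_div_iff₀ (by positivity) (by positivity)]
    nlinarith
  have hmono : ((n:ℝ)+1/2) * (6*x/(3-x^2)) ≤ ((n:ℝ)+1/2) * (Real.log (1+x) - Real.log (1-x)) :=
    mul_le_mul_of_nonneg_left hlb (by linarith)
  linarith

lemma step_ub (n : ℕ) (hn : 1 ≤ n) :
    fseq n - fseq (n+1) ≤ 1/(12*(n:ℝ)) - 1/(12*((n:ℝ)+1)) := by
  have hn0 : (0:ℝ) < n := by exact_mod_cast hn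
  have hn1 : (1:ℝ) ≤ n := by exact_mod_cast hn
  set x : ℝ := 1/(2*n+1) with hxdef
  have hxpos : 0 < x := by positivity
  have hx : x ∈ Set.Icc (0:ℝ) (1/2) := by
    constructor
    · positivity
    · rw [hxdef, div_le_div_iff₀ (by linarith) (by norm_num)]
      linarith
  have h1 : (0:ℝ) < 1+x := by linarith
  have h2 : (0:ℝ) < 1-x := by
    rw [hxdef]; rw [sub_pos, div_lt_one (by linarith)]; linarith
  have h4 : (0:ℝ) < 1-x^2 := by nlinarith
  have hq : Real.log ((n:ℝ)+1) - Real.log n = Real.log (1+x) - Real.log (1-x) := by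
    rw [← Real.log_div (by positivity) hn0.ne', ← Real.log_div h1.ne' h2.ne']
    congr 1
    rw [hxdef]
    field_simp
    ring
  rw [fseq_step n hn, hq]
  have hub := log_ub x hx
  have hx2 : (n:ℝ)+1/2 = 1/(2*x) := by
    rw [hxdef]; field_simp
  have hmul : ((n:ℝ)+1/2) * (2*x + 2*x^3/(3*(1-x^2))) - 1 = 1/(12*(n:ℝ)) - 1/(12*((n:ℝ)+1)) := by
    have e1 : ((n:ℝ)+1/2) * (2*x + 2*x^3/(3*(1-x^2))) - 1 = x^2/(3*(1-x^2)) := by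
      rw [hx2]; field_simp; ring
    have e2 : 1/(12*(n:ℝ)) - 1/(12*((n:ℝ)+1)) = 1/(12*(n:ℝ)*((n:ℝ)+1)) := by
      field_simp; ring
    rw [e1, e2, div_eq_div_iff (by positivity : (3*(1-x^2)) ≠ 0) (by positivity), hxdef]
    have h21 : (2*(n:ℝ)+1) ≠ 0 := by positivity
    field_simp
    ring
  have hmono : ((n:ℝ)+1/2) * (Real.log (1+x) - Real.log (1-x)) ≤ ((n:ℝ)+1/2) * (2*x + 2*x^3/(3*(1-x^2))) :=
    mul_le_mul_of_nonneg_left hub (by linarith)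
  linarith

lemma fseq_tendsto :
    Tendsto fseq atTop (𝓝 (Real.log (Real.sqrt (2*π)))) := by
  have hπ : 0 < Real.sqrt π := Real.sqrt_pos.mpr pi_pos
  have h1 : Tendsto (fun n : ℕ => Real.log (Stirling.stirlingSeq n)) atTop
      (𝓝 (Real.log (Real.sqrt π))) :=
    (Real.continuousAt_log hπ.ne').tendsto.comp Stirling.tendsto_stirlingSeq_sqrt_pi
  have h2 := h1.add_const (1/2 * Real.log 2)
  have heq : ∀ᶠ n : ℕ in atTop,
      Real.log (Stirling.stirlingSeq n) + 1/2*Real.log 2 = fseq n := by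
    filter_upwards [eventually_ge_atTop 1] with n hn
    have hn0 : (0:ℝ) < n := by exact_mod_cast hn
    rw [Stirling.log_stirlingSeq_formula]
    unfold fseq
    rw [Real.log_mul two_ne_zero hn0.ne', Real.log_div hn0.ne' (Real.exp_ne_zero 1),
      Real.log_exp]
    ring
  have hL : Real.log (Real.sqrt π) + 1/2 * Real.log 2 = Real.log (Real.sqrt (2*π)) := by
    rw [Real.log_sqrt pi_pos.le, Real.log_sqrt (by positivity),
      Real.log_mul two_ne_zero pi_pos.ne']
    ring
  exact hL ▸ h2.congr' heq

lemma aux_tendsto_zero (c : ℝ) (_hc : 0 < c) :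
    Tendsto (fun m : ℕ => 1/(12*(m:ℝ)+c)) atTop (𝓝 0) := by
  have h : Tendsto (fun m : ℕ => 12*(m:ℝ)+c) atTop atTop :=
    tendsto_atTop_add_const_right _ c
      (tendsto_natCast_atTop_atTop.const_mul_atTop (by norm_num))
  simpa only [one_div, Pi.inv_def] using h.inv_tendsto_atTop

lemma fseq_ge (n : ℕ) (hn : 1 ≤ n) :
    Real.log (Real.sqrt (2*π)) + 1/(12*(n:ℝ)+1) ≤ fseq n := by
  have hchain : ∀ m, n ≤ m → fseq m - 1/(12*(m:ℝ)+1) ≤ fseq n - 1/(12*(n:ℝ)+1) := by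
    intro m hm
    induction m, hm using Nat.le_induction with
    | base => exact le_rfl
    | succ k hk ih =>
      have hstep := step_lb k (hn.trans hk)
      have : fseq (k+1) - 1/(12*((k:ℝ)+1)+1) ≤ fseq k - 1/(12*(k:ℝ)+1) := by linarith
      push_cast
      push_cast at ih
      linarith
  have hv : Tendsto (fun m : ℕ => fseq m - 1/(12*(m:ℝ)+1)) atTop
      (𝓝 (Real.log (Real.sqrt (2*π)))) := by
    simpa using fseq_tendsto.sub (aux_tendsto_zero 1 one_pos)
  have := le_of_tendsto hv (eventually_atTop.2 ⟨n, hchain⟩)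
  linarith

lemma fseq_le (n : ℕ) (hn : 1 ≤ n) :
    fseq n ≤ Real.log (Real.sqrt (2*π)) + 1/(12*(n:ℝ)) := by
  have hchain : ∀ m, n ≤ m → fseq n - 1/(12*(n:ℝ)) ≤ fseq m - 1/(12*(m:ℝ)) := by
    intro m hm
    induction m, hm using Nat.le_induction with
    | base => exact le_rfl
    | succ k hk ih =>
      have hstep := step_ub k (hn.trans hk)
      have : fseq k - 1/(12*(k:ℝ)) ≤ fseq (k+1) - 1/(12*((k:ℝ)+1)) := by linarith
      push_cast
      push_cast at ih
      linarith
  have hv : Tendsto (fun m : ℕ => fseq m - 1/(12*(m:ℝ))) atTop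
      (𝓝 (Real.log (Real.sqrt (2*π)))) := by
    have h0 : Tendsto (fun m : ℕ => 1/(12*(m:ℝ))) atTop (𝓝 0) := by
      have h : Tendsto (fun m : ℕ => 12*(m:ℝ)) atTop atTop :=
        tendsto_natCast_atTop_atTop.const_mul_atTop (by norm_num)
      simpa only [one_div, Pi.inv_def] using h.inv_tendsto_atTop
    simpa using fseq_tendsto.sub h0
  have := ge_of_tendsto hv (eventually_atTop.2 ⟨n, hchain⟩)
  linarith

/-- Robbins' first-order Stirling bounds:
`(n/e)^n √(2πn) e^{1/(12n+1)} ≤ n! ≤ (n/e)^n √(2πn) e^{1/(12n)}`. -/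
theorem robbins_stirling (n : ℕ) (hn : 1 ≤ n) :
    ((n : ℝ) / Real.exp 1) ^ n * Real.sqrt (2 * Real.pi * n)
        * Real.exp (1 / (12 * (n : ℝ) + 1)) ≤ (Nat.factorial n : ℝ) ∧
      (Nat.factorial n : ℝ) ≤ ((n : ℝ) / Real.exp 1) ^ n * Real.sqrt (2 * Real.pi * n)
        * Real.exp (1 / (12 * (n : ℝ))) := by
  have hn0 : (0:ℝ) < n := by exact_mod_cast hn
  have hfact : (0:ℝ) < (Nat.factorial n : ℝ) := by exact_mod_cast n.factorial_pos
  have hsq : (0:ℝ) < Real.sqrt (2 * π * n) := Real.sqrt_pos.mpr (by positivity)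
  have hpow : (0:ℝ) < ((n : ℝ) / Real.exp 1) ^ n := by positivity
  have hlogsq : Real.log (Real.sqrt (2 * π * n))
      = Real.log (Real.sqrt (2*π)) + 1/2 * Real.log n := by
    rw [Real.log_sqrt (by positivity), Real.log_sqrt (by positivity),
      Real.log_mul (by positivity) hn0.ne']
    ring
  have hlogpow : Real.log (((n : ℝ) / Real.exp 1) ^ n)
      = (n:ℝ) * Real.log n - n := by
    rw [Real.log_pow, Real.log_div hn0.ne' (Real.exp_ne_zero 1), Real.log_exp]
    ring
  have hlognf : Real.log (Nat.factorial n : ℝ)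
      = fseq n + ((n:ℝ) + 1/2) * Real.log n - n := by
    unfold fseq; ring
  constructor
  · have hlb := fseq_ge n hn
    have hkey : Real.log (((n : ℝ) / Real.exp 1) ^ n * Real.sqrt (2 * π * n)
        * Real.exp (1 / (12 * (n : ℝ) + 1))) ≤ Real.log (Nat.factorial n : ℝ) := by
      rw [Real.log_mul (by positivity) (Real.exp_ne_zero _),
        Real.log_mul hpow.ne' hsq.ne', Real.log_exp, hlogsq, hlogpow, hlognf]
      linarith
    calc ((n : ℝ) / Real.exp 1) ^ n * Real.sqrt (2 * π * n) * Real.exp (1 / (12 * (n : ℝ) + 1))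
        = Real.exp (Real.log (((n : ℝ) / Real.exp 1) ^ n * Real.sqrt (2 * π * n)
            * Real.exp (1 / (12 * (n : ℝ) + 1)))) := by
          rw [Real.exp_log (by positivity)]
      _ ≤ Real.exp (Real.log (Nat.factorial n : ℝ)) := Real.exp_le_exp.mpr hkey
      _ = (Nat.factorial n : ℝ) := Real.exp_log hfact
  · have hub := fseq_le n hn
    have hkey : Real.log (Nat.factorial n : ℝ) ≤ Real.log (((n : ℝ) / Real.exp 1) ^ n
        * Real.sqrt (2 * π * n) * Real.exp (1 / (12 * (n : ℝ)))) := by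
      rw [Real.log_mul (by positivity) (Real.exp_ne_zero _),
        Real.log_mul hpow.ne' hsq.ne', Real.log_exp, hlogsq, hlogpow, hlognf]
      linarith
    calc (Nat.factorial n : ℝ) = Real.exp (Real.log (Nat.factorial n : ℝ)) :=
          (Real.exp_log hfact).symm
      _ ≤ Real.exp (Real.log (((n : ℝ) / Real.exp 1) ^ n * Real.sqrt (2 * π * n)
            * Real.exp (1 / (12 * (n : ℝ))))) := Real.exp_le_exp.mpr hkey
      _ = _ := Real.exp_log (by positivity)
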